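/- Let X be a set, (Y, 𝔉) a measurable space, and ν a σ-finite measure on Y. Let F be a nonempty finite set, where each f ∈ F assigns to every x ∈ X a measurable density f(·|x) : Y → [0,∞) with ∫ f(y|x) dν(y) = 1. For densities p, q on Y (with respect to ν) define the squared Hellinger distance H²(p,q) := (1/2) ∫ (√(p(y)) − √(q(y)))² dν(y). Fix f* ∈ F, an integer T ≥ 1, and covariates x^(1),…,x^(T) ∈ X, and let y^(1),…,y^(T) be independent random variables where y^(t) is distributed according to the probability measure on Y with density f*(·|x^(t)) with respect to ν. Let f̂ be any maximizer over f ∈ F of the likelihood ∏_{t=1}^{T} f(y^(t)|x^(t)) (a measurable selection of the maximum likelihood estimator). Then for every δ ∈ (0,1), with probability at least 1 − δ, ∑_{t=1}^{T} H²( f̂(·|x^(t)), f*(·|x^(t)) ) ≤ log(|F|/δ), where log denotes the natural logarithm. -/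

import Mathlib

open MeasureTheory ProbabilityTheory

lemma aux_sqrt_prod {ι : Type*} (s : Finset ι) (a : ι → ℝ) (ha : ∀ i, 0 ≤ a i) :
    Real.sqrt (∏ i ∈ s, a i) = ∏ i ∈ s, Real.sqrt (a i) := by
  classical
  induction s using Finset.induction with
  | empty => simp
  | @insert i s hi ih =>
    rw [Finset.prod_insert hi, Finset.prod_insert hi, Real.sqrt_mul (ha i), ih]

lemma aux_iIndepFun_ae_eq {Ω ι Y : Type*} [MeasurableSpace Ω] [MeasurableSpace Y]
    {P : Measure Ω} {f g : ι → Ω → Y}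
    (h : iIndepFun f P) (hfg : ∀ i, f i =ᵐ[P] g i) :
    iIndepFun g P := by
  rw [iIndepFun_iff_measure_inter_preimage_eq_mul] at h ⊢
  intro S sets hsets
  have hpre : ∀ i, f i ⁻¹' sets i =ᵐ[P] g i ⁻¹' sets i := by
    intro i
    filter_upwards [hfg i] with ω hω
    show (f i ω ∈ sets i) = (g i ω ∈ sets i)
    rw [hω]
  have h2 : (⋂ i ∈ S, f i ⁻¹' sets i) =ᵐ[P] (⋂ i ∈ S, g i ⁻¹' sets i) := by
    exact EventuallyEq.countable_bInter S.countable_toSet (fun i _ => hpre i)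
  rw [← measure_congr h2, h S hsets]
  exact Finset.prod_congr rfl (fun i _ => measure_congr (hpre i))

lemma aux_lintegral_prod {Ω ι : Type*} [MeasurableSpace Ω] (P : Measure Ω)
    [IsProbabilityMeasure P] (g : ι → Ω → ENNReal)
    (hg : iIndepFun g P) (hgm : ∀ i, Measurable (g i))
    (s : Finset ι) :
    ∫⁻ ω, ∏ i ∈ s, g i ω ∂P = ∏ i ∈ s, ∫⁻ ω, g i ω ∂P := by
  classical
  induction s using Finset.induction with
  | empty => simp
  | @insert i s hi ih =>
    simp only [Finset.prod_insert hi]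
    rw [← ih]
    have hindep : IndepFun (fun ω => ∏ j ∈ s, g j ω) (g i) P := by
      have h0 := hg.indepFun_finset_prod_of_notMem hgm hi (s := s) (i := i)
      have he : (∏ j ∈ s, g j) = fun ω => ∏ j ∈ s, g j ω := by
        funext ω; simp
      rwa [he] at h0
    have hpm : Measurable (fun ω => ∏ j ∈ s, g j ω) := by
      exact Finset.measurable_prod s (fun j _ => hgm j)
    have key := lintegral_mul_eq_lintegral_mul_lintegral_of_indepFun''
      hpm.aemeasurable (hgm i).aemeasurable hindep
    calc ∫⁻ ω, g i ω * ∏ j ∈ s, g j ω ∂P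
        = ∫⁻ ω, (∏ j ∈ s, g j ω) * g i ω ∂P := by simp_rw [mul_comm]
      _ = (∫⁻ ω, ∏ j ∈ s, g j ω ∂P) * ∫⁻ ω, g i ω ∂P := key
      _ = (∫⁻ ω, g i ω ∂P) * ∫⁻ ω, ∏ j ∈ s, g j ω ∂P := mul_comm _ _

lemma aux_hellinger {Y : Type*} [MeasurableSpace Y] (ν : Measure Y) (p q : Y → ℝ)
    (hp : Measurable p) (hq : Measurable q)
    (hp0 : ∀ y, 0 ≤ p y) (hq0 : ∀ y, 0 ≤ q y)
    (hp1 : ∫ y, p y ∂ν = 1) (hq1 : ∫ y, q y ∂ν = 1) :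
    Integrable (fun y => Real.sqrt (p y) * Real.sqrt (q y)) ν ∧
    ∫ y, Real.sqrt (p y) * Real.sqrt (q y) ∂ν
      = 1 - (1/2) * ∫ y, (Real.sqrt (p y) - Real.sqrt (q y))^2 ∂ν := by
  have hpi : Integrable p ν := by
    by_contra h; rw [integral_undef h] at hp1; norm_num at hp1
  have hqi : Integrable q ν := by
    by_contra h; rw [integral_undef h] at hq1; norm_num at hq1
  have hbound : ∀ y, Real.sqrt (p y) * Real.sqrt (q y) ≤ (p y + q y) / 2 := by
    intro y
    nlinarith [sq_nonneg (Real.sqrt (p y) - Real.sqrt (q y)), Real.sq_sqrt (hp0 y),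
      Real.sq_sqrt (hq0 y), Real.sqrt_nonneg (p y), Real.sqrt_nonneg (q y)]
  have hint : Integrable (fun y => Real.sqrt (p y) * Real.sqrt (q y)) ν := by
    refine Integrable.mono' ((hpi.add hqi).div_const 2)
      ((hp.sqrt.mul hq.sqrt).aestronglyMeasurable) ?_
    filter_upwards with y
    rw [Real.norm_of_nonneg (mul_nonneg (Real.sqrt_nonneg _) (Real.sqrt_nonneg _))]
    exact hbound y
  refine ⟨hint, ?_⟩
  have hsq : (fun y => (Real.sqrt (p y) - Real.sqrt (q y))^2)
      = fun y => (p y + q y) - 2 * (Real.sqrt (p y) * Real.sqrt (q y)) := by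
    funext y
    have h1 := Real.sq_sqrt (hp0 y); have h2 := Real.sq_sqrt (hq0 y)
    nlinarith [h1, h2]
  have hadd : Integrable (fun y => p y + q y) ν := hpi.add hqi
  have hmul2 : Integrable (fun y => 2 * (Real.sqrt (p y) * Real.sqrt (q y))) ν :=
    hint.const_mul 2
  rw [hsq, integral_sub hadd hmul2, integral_add hpi hqi, MeasureTheory.integral_const_mul, hp1, hq1]
  ring

/-- Fixed-design guarantee in squared Hellinger distance for maximum
likelihood estimation in well-specified conditional density estimation: with probability at
least `1 − δ`, `∑_t H²(f̂(·|x^(t)), f*(·|x^(t))) ≤ log(|F|/δ)`.  The rounds are indexed by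
`Fin T`; each `f ∈ F` assigns to every `x` a density `f x : Y → ℝ` with respect to the
σ-finite measure `ν`; the outcomes `y t` are independent with law `f*(·|x t)·ν`; `f̂` is any
(pointwise) maximizer over `F` of the likelihood; and the squared Hellinger distance between
densities `p, q` is `(1/2) ∫ (√p − √q)² dν`. -/
theorem mle_offline_hellinger_guarantee {X Y Ω : Type*}
    [MeasurableSpace Y] [MeasurableSpace Ω]
    (P : Measure Ω) [IsProbabilityMeasure P]
    (ν : Measure Y) [SigmaFinite ν]
    (F : Finset (X → Y → ℝ)) (hF : F.Nonempty)
    (hmeas : ∀ f ∈ F, ∀ x, Measurable (f x))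
    (hnonneg : ∀ f ∈ F, ∀ x y, 0 ≤ f x y)
    (hdens : ∀ f ∈ F, ∀ x, ∫ y, f x y ∂ν = 1)
    (fstar : X → Y → ℝ) (hfstar : fstar ∈ F)
    (T : ℕ) (hT : 1 ≤ T) (x : Fin T → X)
    (y : Fin T → Ω → Y)
    (hIndep : iIndepFun y P)
    (hlaw : ∀ t, Measure.map (y t) P
      = ν.withDensity (fun yy => ENNReal.ofReal (fstar (x t) yy)))
    (fhat : Ω → (X → Y → ℝ))
    (hmem : ∀ ω, fhat ω ∈ F)
    (hMLE : ∀ ω, ∀ f ∈ F, ∏ t, f (x t) (y t ω) ≤ ∏ t, fhat ω (x t) (y t ω))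
    (δ : ℝ) (hδ : δ ∈ Set.Ioo (0 : ℝ) 1) :
    1 - δ ≤
      (P {ω | ∑ t, (1 / 2) * ∫ yy,
          (Real.sqrt (fhat ω (x t) yy) - Real.sqrt (fstar (x t) yy)) ^ 2 ∂ν
        ≤ Real.log (F.card / δ)}).toReal := by
  classical
  obtain ⟨hδ0, hδ1⟩ := hδ
  set L : ℝ := Real.log (F.card / δ) with hLdef
  set H : (X → Y → ℝ) → Fin T → ℝ := fun f t =>
    (1 / 2) * ∫ yy, (Real.sqrt (f (x t) yy) - Real.sqrt (fstar (x t) yy)) ^ 2 ∂ν with hHdef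
  have hcard : (0 : ℝ) < F.card := by
    exact_mod_cast Finset.card_pos.mpr hF
  -- integrability of the densities
  have hInt : ∀ f ∈ F, ∀ x0, Integrable (f x0) ν := by
    intro f hf x0
    by_contra h
    have := hdens f hf x0
    rw [integral_undef h] at this
    norm_num at this
  -- withDensity is a probability measure
  have hwd : ∀ t, (ν.withDensity fun yy => ENNReal.ofReal (fstar (x t) yy)) Set.univ = 1 := by
    intro t
    rw [withDensity_apply _ MeasurableSet.univ, Measure.restrict_univ,
      ← ofReal_integral_eq_lintegral_ofReal (hInt fstar hfstar (x t))
        (Filter.Eventually.of_forall fun yy => hnonneg fstar hfstar (x t) yy),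
      hdens fstar hfstar (x t)]
    simp
  -- each y t is a.e.-measurable
  have hyae : ∀ t, AEMeasurable (y t) P := by
    intro t
    by_contra h
    have h0 := Measure.map_of_not_aemeasurable h
    rw [hlaw t] at h0
    have := hwd t
    rw [h0] at this
    simp at this
  -- measurable modification
  set y' : Fin T → Ω → Y := fun t => (hyae t).mk (y t) with hy'def
  have hy'meas : ∀ t, Measurable (y' t) := fun t => (hyae t).measurable_mk
  have hy'eq : ∀ t, y t =ᵐ[P] y' t := fun t => (hyae t).ae_eq_mk
  have hIndep' : iIndepFun y' P :=
    aux_iIndepFun_ae_eq hIndep hy'eq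
  have hlaw' : ∀ t, Measure.map (y' t) P
      = ν.withDensity (fun yy => ENNReal.ofReal (fstar (x t) yy)) := by
    intro t
    rw [← Measure.map_congr (hy'eq t), hlaw t]
  -- agreement null set
  have hagree_null : P {ω | ¬ ∀ t, y t ω = y' t ω} = 0 := by
    have h1 : ∀ t, P {ω | y t ω ≠ y' t ω} = 0 := by
      intro t
      have := hy'eq t
      rwa [Filter.EventuallyEq, ae_iff] at this
    refine measure_mono_null ?_ (measure_iUnion_null h1)
    intro ω hω
    simp only [Set.mem_setOf_eq, not_forall] at hω
    obtain ⟨t, ht⟩ := hω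
    exact Set.mem_iUnion.mpr ⟨t, ht⟩
  obtain ⟨M, hMsub, hMmeas, hM0⟩ := exists_measurable_superset_of_null hagree_null
  -- positivity null set
  set N : Set Ω := ⋃ t, (y' t) ⁻¹' {yy | fstar (x t) yy ≤ 0} with hNdef
  have hN0 : P N = 0 := by
    refine measure_iUnion_null fun t => ?_
    have hE : MeasurableSet {yy | fstar (x t) yy ≤ 0} :=
      measurableSet_le (hmeas fstar hfstar (x t)) measurable_const
    rw [← Measure.map_apply (hy'meas t) hE, hlaw' t, withDensity_apply _ hE]
    rw [setLIntegral_congr_fun hE (fun yy hyy =>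
      ENNReal.ofReal_of_nonpos hyy)]
    simp
  -- Hellinger affinity facts
  have haff : ∀ f ∈ F, ∀ t,
      Integrable (fun yy => Real.sqrt (f (x t) yy) * Real.sqrt (fstar (x t) yy)) ν ∧
      ∫ yy, Real.sqrt (f (x t) yy) * Real.sqrt (fstar (x t) yy) ∂ν = 1 - H f t := by
    intro f hf t
    exact aux_hellinger ν (f (x t)) (fstar (x t)) (hmeas f hf (x t)) (hmeas fstar hfstar (x t))
      (hnonneg f hf (x t)) (hnonneg fstar hfstar (x t)) (hdens f hf (x t))
      (hdens fstar hfstar (x t))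
  -- per-factor bound
  set ψ : (X → Y → ℝ) → Fin T → Y → ENNReal := fun f t yy =>
    ENNReal.ofReal (Real.sqrt (f (x t) yy) / Real.sqrt (fstar (x t) yy)) with hψdef
  have hψmeas : ∀ f ∈ F, ∀ t, Measurable (ψ f t) := by
    intro f hf t
    exact ((hmeas f hf (x t)).sqrt.div (hmeas fstar hfstar (x t)).sqrt).ennreal_ofReal
  have hfac : ∀ f ∈ F, ∀ t,
      ∫⁻ ω, ψ f t (y' t ω) ∂P ≤ ENNReal.ofReal (Real.exp (-(H f t))) := by
    intro f hf t
    have h1 : ∫⁻ ω, ψ f t (y' t ω) ∂P = ∫⁻ yy, ψ f t yy ∂(Measure.map (y' t) P) :=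
      (lintegral_map (hψmeas f hf t) (hy'meas t)).symm
    rw [h1, hlaw' t, lintegral_withDensity_eq_lintegral_mul ν
      ((hmeas fstar hfstar (x t)).ennreal_ofReal) (hψmeas f hf t)]
    have h2 : ∀ yy, ((fun yy => ENNReal.ofReal (fstar (x t) yy)) * ψ f t) yy
        ≤ ENNReal.ofReal (Real.sqrt (f (x t) yy) * Real.sqrt (fstar (x t) yy)) := by
      intro yy
      simp only [Pi.mul_apply, hψdef]
      rcases eq_or_lt_of_le (hnonneg fstar hfstar (x t) yy) with h0 | h0
      · rw [← h0]; simp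
      · rw [← ENNReal.ofReal_mul (le_of_lt h0)]
        apply ENNReal.ofReal_le_ofReal
        have : fstar (x t) yy * (Real.sqrt (f (x t) yy) / Real.sqrt (fstar (x t) yy))
            = Real.sqrt (f (x t) yy) * (fstar (x t) yy / Real.sqrt (fstar (x t) yy)) := by
          ring
        rw [this, Real.div_sqrt]
    calc ∫⁻ yy, ((fun yy => ENNReal.ofReal (fstar (x t) yy)) * ψ f t) yy ∂ν
        ≤ ∫⁻ yy, ENNReal.ofReal (Real.sqrt (f (x t) yy) * Real.sqrt (fstar (x t) yy)) ∂ν :=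
          lintegral_mono h2
      _ = ENNReal.ofReal (∫ yy, Real.sqrt (f (x t) yy) * Real.sqrt (fstar (x t) yy) ∂ν) :=
          (ofReal_integral_eq_lintegral_ofReal (haff f hf t).1
            (Filter.Eventually.of_forall fun yy =>
              mul_nonneg (Real.sqrt_nonneg _) (Real.sqrt_nonneg _))).symm
      _ = ENNReal.ofReal (1 - H f t) := by rw [(haff f hf t).2]
      _ ≤ ENNReal.ofReal (Real.exp (-(H f t))) := by
          apply ENNReal.ofReal_le_ofReal
          have := Real.add_one_le_exp (-(H f t))
          linarith
  -- independence of the factors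
  have hgIndep : ∀ f ∈ F, iIndepFun
      (fun t ω => ψ f t (y' t ω)) P := by
    intro f hf
    exact hIndep'.comp (fun t => ψ f t) (fun t => hψmeas f hf t)
  -- product bound
  have hZ : ∀ f ∈ F, ∫⁻ ω, ∏ t, ψ f t (y' t ω) ∂P
      ≤ ENNReal.ofReal (Real.exp (-(∑ t, H f t))) := by
    intro f hf
    rw [aux_lintegral_prod P (fun t ω => ψ f t (y' t ω)) (hgIndep f hf)
      (fun t => (hψmeas f hf t).comp (hy'meas t)) Finset.univ]
    calc ∏ t, ∫⁻ ω, ψ f t (y' t ω) ∂P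
        ≤ ∏ t, ENNReal.ofReal (Real.exp (-(H f t))) :=
          Finset.prod_le_prod' fun t _ => hfac f hf t
      _ = ENNReal.ofReal (∏ t, Real.exp (-(H f t))) := by
          rw [← ENNReal.ofReal_prod_of_nonneg]
          intro t _; exact le_of_lt (Real.exp_pos _)
      _ = ENNReal.ofReal (Real.exp (-(∑ t, H f t))) := by
          congr 1
          rw [← Finset.sum_neg_distrib, Real.exp_sum]
  -- Markov: the bad event for each f
  set A : (X → Y → ℝ) → Set Ω := fun f =>
    {ω | ∏ t, fstar (x t) (y' t ω) ≤ ∏ t, f (x t) (y' t ω)} with hAdef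
  have hAmeas : ∀ f ∈ F, MeasurableSet (A f) := by
    intro f hf
    exact measurableSet_le
      (Finset.measurable_prod Finset.univ fun t _ =>
        (hmeas fstar hfstar (x t)).comp (hy'meas t))
      (Finset.measurable_prod Finset.univ fun t _ =>
        (hmeas f hf (x t)).comp (hy'meas t))
  have hA : ∀ f ∈ F, P (A f) ≤ ENNReal.ofReal (Real.exp (-(∑ t, H f t))) := by
    intro f hf
    have hsub : A f ⊆ {ω | 1 ≤ ∏ t, ψ f t (y' t ω)} ∪ N := by
      intro ω hω
      by_cases hN : ω ∈ N
      · exact Or.inr hN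
      left
      have hpos : ∀ t, 0 < fstar (x t) (y' t ω) := by
        intro t
        by_contra hc
        push_neg at hc
        exact hN (Set.mem_iUnion.mpr ⟨t, hc⟩)
      simp only [Set.mem_setOf_eq, hψdef]
      rw [← ENNReal.ofReal_prod_of_nonneg (fun t _ =>
        div_nonneg (Real.sqrt_nonneg _) (Real.sqrt_nonneg _))]
      rw [ENNReal.one_le_ofReal]
      rw [Finset.prod_div_distrib]
      have hfp : ∏ t, Real.sqrt (f (x t) (y' t ω)) = Real.sqrt (∏ t, f (x t) (y' t ω)) :=
        (aux_sqrt_prod Finset.univ _ (fun t => hnonneg f hf (x t) (y' t ω))).symm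
      have hsp : ∏ t, Real.sqrt (fstar (x t) (y' t ω))
          = Real.sqrt (∏ t, fstar (x t) (y' t ω)) :=
        (aux_sqrt_prod Finset.univ _ (fun t => le_of_lt (hpos t))).symm
      rw [hfp, hsp]
      have hppos : 0 < ∏ t, fstar (x t) (y' t ω) := Finset.prod_pos (fun t _ => hpos t)
      rw [le_div_iff₀ (Real.sqrt_pos.mpr hppos), one_mul]
      exact Real.sqrt_le_sqrt hω
    calc P (A f) ≤ P ({ω | 1 ≤ ∏ t, ψ f t (y' t ω)} ∪ N) := measure_mono hsub
      _ ≤ P {ω | 1 ≤ ∏ t, ψ f t (y' t ω)} + P N := measure_union_le _ _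
      _ = P {ω | 1 ≤ ∏ t, ψ f t (y' t ω)} := by rw [hN0, add_zero]
      _ ≤ ∫⁻ ω, ∏ t, ψ f t (y' t ω) ∂P := by
          have hm := mul_meas_ge_le_lintegral₀ (μ := P)
            (f := fun ω => ∏ t, ψ f t (y' t ω))
            ((Finset.measurable_prod Finset.univ fun t _ =>
              (hψmeas f hf t).comp (hy'meas t)).aemeasurable) 1
          simpa using hm
      _ ≤ ENNReal.ofReal (Real.exp (-(∑ t, H f t))) := hZ f hf
  -- the bad set
  set badF : Finset (X → Y → ℝ) := F.filter (fun f => L < ∑ t, H f t) with hbadFdef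
  set Bad : Set Ω := ⋃ f ∈ badF, A f with hBaddef
  have hBadMeas : MeasurableSet Bad :=
    badF.measurableSet_biUnion (fun f hf => hAmeas f (Finset.mem_filter.mp hf).1)
  have hexp : ∀ f ∈ badF, ENNReal.ofReal (Real.exp (-(∑ t, H f t)))
      ≤ ENNReal.ofReal (δ / F.card) := by
    intro f hf
    obtain ⟨hfF, hfL⟩ := Finset.mem_filter.mp hf
    apply ENNReal.ofReal_le_ofReal
    have h1 : Real.exp (-(∑ t, H f t)) ≤ Real.exp (-L) :=
      Real.exp_le_exp.mpr (by linarith)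
    have h2 : Real.exp (-L) = δ / F.card := by
      rw [hLdef, Real.exp_neg, Real.exp_log (div_pos hcard hδ0), inv_div]
    linarith [h1, h2.le, h2.ge]
  have hBadBound : P Bad ≤ ENNReal.ofReal δ := by
    calc P Bad ≤ ∑ f ∈ badF, P (A f) := measure_biUnion_finset_le badF A
      _ ≤ ∑ f ∈ badF, ENNReal.ofReal (δ / F.card) := by
          refine Finset.sum_le_sum fun f hf => ?_
          exact le_trans (hA f (Finset.mem_filter.mp hf).1) (hexp f hf)
      _ = (badF.card : ENNReal) * ENNReal.ofReal (δ / F.card) := by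
          rw [Finset.sum_const, nsmul_eq_mul]
      _ ≤ (F.card : ENNReal) * ENNReal.ofReal (δ / F.card) := by
          exact mul_le_mul_left
            (by exact_mod_cast Finset.card_le_card (Finset.filter_subset _ F)) _
      _ = ENNReal.ofReal δ := by
          rw [← ENNReal.ofReal_natCast, ← ENNReal.ofReal_mul (by positivity)]
          congr 1
          field_simp
  -- the good event is contained in the target set
  have hsubS : (Bad ∪ M)ᶜ ⊆ {ω | ∑ t, (1 / 2) * ∫ yy,
      (Real.sqrt (fhat ω (x t) yy) - Real.sqrt (fstar (x t) yy)) ^ 2 ∂ν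
      ≤ Real.log (F.card / δ)} := by
    intro ω hω
    obtain ⟨hωBad, hωM⟩ := (by simpa using hω : ω ∉ Bad ∧ ω ∉ M)
    have hagree : ∀ t, y t ω = y' t ω := by
      by_contra hc
      exact hωM (hMsub hc)
    show ∑ t, H (fhat ω) t ≤ L
    by_contra hc
    push_neg at hc
    have hfhatbad : fhat ω ∈ badF := Finset.mem_filter.mpr ⟨hmem ω, hc⟩
    have hωA : ω ∈ A (fhat ω) := by
      have h0 := hMLE ω fstar hfstar
      have e1 : ∏ t, fstar (x t) (y t ω) = ∏ t, fstar (x t) (y' t ω) :=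
        Finset.prod_congr rfl fun t _ => by rw [hagree t]
      have e2 : ∏ t, fhat ω (x t) (y t ω) = ∏ t, fhat ω (x t) (y' t ω) :=
        Finset.prod_congr rfl fun t _ => by rw [hagree t]
      show ∏ t, fstar (x t) (y' t ω) ≤ ∏ t, fhat ω (x t) (y' t ω)
      rw [← e1, ← e2]; exact h0
    exact hωBad (Set.mem_biUnion hfhatbad hωA)
  -- conclusion
  rw [← ENNReal.ofReal_le_iff_le_toReal (measure_ne_top P _)]
  have h1 : P ((Bad ∪ M)ᶜ) ≤ P _ := measure_mono hsubS
  have h2 : P ((Bad ∪ M)ᶜ) = 1 - P (Bad ∪ M) :=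
    prob_compl_eq_one_sub (hBadMeas.union hMmeas)
  have h3 : P (Bad ∪ M) ≤ ENNReal.ofReal δ := by
    calc P (Bad ∪ M) ≤ P Bad + P M := measure_union_le _ _
      _ = P Bad := by rw [hM0, add_zero]
      _ ≤ ENNReal.ofReal δ := hBadBound
  calc ENNReal.ofReal (1 - δ) ≤ 1 - ENNReal.ofReal δ := by
        rw [ENNReal.ofReal_sub _ (le_of_lt hδ0)]
        simp
      _ ≤ 1 - P (Bad ∪ M) := tsub_le_tsub_left h3 1
      _ = P ((Bad ∪ M)ᶜ) := h2.symm
      _ ≤ _ := h1
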